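/- Define on functions z : ℤ → ℝ the flows K̃_1(z)(n) = z(n)(z(n+1) - z(n)) and σ̃_1(z)(n) = n·K̃_1(z)(n) + z(n+1)z(n) - z(n). Then the Lie bracket ⟦K̃_1, σ̃_1⟧(z) := K̃_1'(z)[σ̃_1(z)] - σ̃_1'(z)[K̃_1(z)] equals K̃_2(z) + K̃_1(z), where K̃_2(z)(n) = z(n)(z(n+2)z(n+1) - z(n+1)z(n)) - 2K̃_1(z)(n). -/

import Mathlib

/-- The first combined sdBurgers flow. -/
def sdK1 (z : ℤ → ℝ) : ℤ → ℝ := fun n => z n * (z (n + 1) - z n)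

/-- The second combined sdBurgers flow. -/
def sdK2 (z : ℤ → ℝ) : ℤ → ℝ :=
  fun n => z n * (z (n + 2) * z (n + 1) - z (n + 1) * z n) - 2 * sdK1 z n

/-- The master symmetry of the combined sdBurgers hierarchy. -/
def sdSigma1 (z : ℤ → ℝ) : ℤ → ℝ :=
  fun n => (n : ℝ) * sdK1 z n + z (n + 1) * z n - z n

private lemma affine_hasDeriv (a A : ℝ) : HasDerivAt (fun ε : ℝ => a + ε * A) A 0 := by
  simpa using ((hasDerivAt_id (0:ℝ)).mul_const A).const_add a

/-- Base case of the master-symmetry recursion: ⟦K̃_1, σ̃_1⟧ = K̃_2 + K̃_1,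
    with the Lie bracket of lattice vector fields computed via pointwise
    Gâteaux derivatives. -/
theorem sdBurgers_K1_sigma1_bracket (z : ℤ → ℝ) (n : ℤ) :
    deriv (fun ε : ℝ => sdK1 (fun m => z m + ε * sdSigma1 z m) n) 0
      - deriv (fun ε : ℝ => sdSigma1 (fun m => z m + ε * sdK1 z m) n) 0
      = sdK2 z n + sdK1 z n := by
  have h0 := affine_hasDeriv (z n) (sdSigma1 z n)
  have h1 := affine_hasDeriv (z (n+1)) (sdSigma1 z (n+1))
  have g0 := affine_hasDeriv (z n) (sdK1 z n)
  have g1 := affine_hasDeriv (z (n+1)) (sdK1 z (n+1))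
  have H1 : HasDerivAt (fun ε : ℝ => sdK1 (fun m => z m + ε * sdSigma1 z m) n)
      (sdSigma1 z n * (z (n+1) + 0 * sdSigma1 z (n+1) - (z n + 0 * sdSigma1 z n))
        + (z n + 0 * sdSigma1 z n) * (sdSigma1 z (n+1) - sdSigma1 z n)) 0 := by
    simpa [sdK1, Pi.mul_def, Pi.sub_def] using h0.mul (h1.sub h0)
  have H2 : HasDerivAt (fun ε : ℝ => sdSigma1 (fun m => z m + ε * sdK1 z m) n)
      ((n : ℝ) * (sdK1 z n * (z (n+1) + 0 * sdK1 z (n+1) - (z n + 0 * sdK1 z n))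
          + (z n + 0 * sdK1 z n) * (sdK1 z (n+1) - sdK1 z n))
        + (sdK1 z (n+1) * (z n + 0 * sdK1 z n)
          + (z (n+1) + 0 * sdK1 z (n+1)) * sdK1 z n)
        - sdK1 z n) 0 := by
    simpa [sdSigma1, sdK1, Pi.mul_def, Pi.sub_def, Pi.add_def] using (((g0.mul (g1.sub g0)).const_mul (n : ℝ)).add (g1.mul g0)).sub g0
  rw [H1.deriv, H2.deriv]
  have e2 : n + 1 + 1 = n + 2 := by ring
  simp only [sdK1, sdK2, sdSigma1, e2]
  push_cast
  ring
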